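/- Let M be a finite hypermodular matroid of rank ≥ 3 and let F be a flat of M with r(M) − r(F) ≥ 3. Then the contraction M/F is a hypermodular matroid. -/

import Mathlib

open Set Matroid
open scoped Matroid

namespace SMC

variable {α : Type*}

/-- The rank of a set `X` in a matroid `M`: the maximum cardinality of an
independent subset of `X` (intended for finite matroids). -/
noncomputable def rk (M : Matroid α) (X : Set α) : ℕ :=
  sSup {n | ∃ I, M.Indep I ∧ I ⊆ X ∧ I.ncard = n}

/-- The rank of a matroid: the rank of its ground set. -/
noncomputable def rkM (M : Matroid α) : ℕ := rk M M.E

/-- The modular defect of a pair of sets: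
`r(X) + r(Y) - r(X ∪ Y) - r(X ∩ Y)` (a natural number). -/
noncomputable def pairDefect (M : Matroid α) (X Y : Set α) : ℕ :=
  rk M X + rk M Y - rk M (X ∪ Y) - rk M (X ∩ Y)

/-- A pair of sets is a modular pair if its modular defect is zero. -/
def ModularPair (M : Matroid α) (X Y : Set α) : Prop := pairDefect M X Y = 0

/-- A matroid is modular if every pair of flats is a modular pair. -/
def Modular (M : Matroid α) : Prop :=
  ∀ F L : Set α, M.IsFlat F → M.IsFlat L → ModularPair M F L

/-- A matroid (of rank at least 3) is hypermodular if every pair of flats of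
rank `r(M) - 1` is a modular pair. -/
def Hypermodular (M : Matroid α) : Prop :=
  ∀ F L : Set α, M.IsFlat F → M.IsFlat L →
    rk M F + 1 = rkM M → rk M L + 1 = rkM M → ModularPair M F L

/-- A modular cut of `M`: a collection of flats that is upward closed and
closed under intersections of modular pairs. -/
def ModularCut (M : Matroid α) (𝓜 : Set (Set α)) : Prop :=
  (∀ F ∈ 𝓜, M.IsFlat F) ∧
  (∀ L ∈ 𝓜, ∀ F : Set α, M.IsFlat F → L ⊆ F → F ∈ 𝓜) ∧
  (∀ F ∈ 𝓜, ∀ L ∈ 𝓜, ModularPair M F L → F ∩ L ∈ 𝓜)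

/-- A principal modular cut: the collection of all flats containing some fixed flat. -/
def PrincipalCut (M : Matroid α) (𝓜 : Set (Set α)) : Prop :=
  ∃ F : Set α, M.IsFlat F ∧ 𝓜 = {L | M.IsFlat L ∧ F ⊆ L}

/-- The modular cut generated by a collection `S` of flats:
the smallest modular cut containing `S`. -/
def genCut (M : Matroid α) (S : Set (Set α)) : Set (Set α) :=
  ⋂₀ {𝓜 | ModularCut M 𝓜 ∧ S ⊆ 𝓜}

/-- A Vámos line arrangement in a rank-4 matroid: four pairwise disjoint rank-2
flats, the union of any three of which has rank 4, with `r(T₀ ∪ T₁) = 3`,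
`r(Tᵢ ∪ Lⱼ) = 3` for all `i, j`, and `r(L₀ ∪ L₁) = 4`. -/
def VamosQuad (M : Matroid α) (T₀ T₁ L₀ L₁ : Set α) : Prop :=
  M.IsFlat T₀ ∧ M.IsFlat T₁ ∧ M.IsFlat L₀ ∧ M.IsFlat L₁ ∧
  rk M T₀ = 2 ∧ rk M T₁ = 2 ∧ rk M L₀ = 2 ∧ rk M L₁ = 2 ∧
  Disjoint T₀ T₁ ∧ Disjoint T₀ L₀ ∧ Disjoint T₀ L₁ ∧
  Disjoint T₁ L₀ ∧ Disjoint T₁ L₁ ∧ Disjoint L₀ L₁ ∧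
  rk M (T₀ ∪ T₁ ∪ L₀) = 4 ∧ rk M (T₀ ∪ T₁ ∪ L₁) = 4 ∧
  rk M (T₀ ∪ L₀ ∪ L₁) = 4 ∧ rk M (T₁ ∪ L₀ ∪ L₁) = 4 ∧
  rk M (T₀ ∪ T₁) = 3 ∧
  rk M (T₀ ∪ L₀) = 3 ∧ rk M (T₀ ∪ L₁) = 3 ∧
  rk M (T₁ ∪ L₀) = 3 ∧ rk M (T₁ ∪ L₁) = 3 ∧
  rk M (L₀ ∪ L₁) = 4

/-- The modular defect of a matroid: the sum of the modular defects of all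
unordered pairs of flats (the sum over ordered pairs is twice this). -/
noncomputable def matroidDefect (M : Matroid α) : ℕ :=
  (∑ᶠ F ∈ {F | M.IsFlat F}, ∑ᶠ L ∈ {L | M.IsFlat L}, pairDefect M F L) / 2


/-- The contraction M/C of a matroid, defined via duality and restriction
(deletion): M/C = (M* \ C)*. -/
noncomputable def contractBy (M : Matroid α) (C : Set α) : Matroid α :=
  (M✶ ↾ (M.E \ C))✶

section Helpers

variable {M : Matroid α} {X Y I J G F A' B' : Set α} {e : α}

lemma rk_bddAbove (hfin : M.E.Finite) (X : Set α) :
    BddAbove {n | ∃ I, M.Indep I ∧ I ⊆ X ∧ I.ncard = n} :=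
  ⟨M.E.ncard, by rintro n ⟨I, hI, -, rfl⟩; exact Set.ncard_le_ncard hI.subset_ground hfin⟩

lemma ncard_le_rk (hfin : M.E.Finite) (hI : M.Indep I) (hIX : I ⊆ X) :
    I.ncard ≤ rk M X :=
  le_csSup (rk_bddAbove hfin X) ⟨I, hI, hIX, rfl⟩

lemma rk_le (hfin : M.E.Finite) {n : ℕ} (h : ∀ I, M.Indep I → I ⊆ X → I.ncard ≤ n) :
    rk M X ≤ n :=
  csSup_le ⟨0, ∅, M.empty_indep, empty_subset X, by simp⟩
    (by rintro m ⟨I, hI, hIX, rfl⟩; exact h I hI hIX)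

lemma rk_eq_of_basis' (hfin : M.E.Finite) (hI : M.IsBasis' I X) : rk M X = I.ncard := by
  refine le_antisymm (rk_le hfin fun J hJ hJX => ?_) (ncard_le_rk hfin hI.indep hI.subset)
  obtain ⟨J', hJ', hJJ'⟩ := hJ.subset_isBasis'_of_subset hJX
  have h1 : J'.ncard = I.ncard := by
    rw [Set.ncard_def, hJ'.encard_eq_encard hI, ← Set.ncard_def]
  have h2 : J.ncard ≤ J'.ncard :=
    Set.ncard_le_ncard hJJ' (hfin.subset hJ'.indep.subset_ground)
  omega

lemma rk_mono (hfin : M.E.Finite) (hXY : X ⊆ Y) : rk M X ≤ rk M Y :=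
  rk_le hfin fun I hI hIX => ncard_le_rk hfin hI (hIX.trans hXY)

lemma rk_closure_eq (hfin : M.E.Finite) (X : Set α) : rk M (M.closure X) = rk M X := by
  obtain ⟨I, hI⟩ := M.exists_isBasis' X
  rw [rk_eq_of_basis' hfin hI, rk_eq_of_basis' hfin hI.isBasis_closure_right.isBasis']

lemma mem_closure_iff_rk (hfin : M.E.Finite) (hX : X ⊆ M.E) (he : e ∈ M.E) :
    e ∈ M.closure X ↔ rk M (insert e X) = rk M X := by
  obtain ⟨I, hI⟩ := M.exists_isBasis X hX
  constructor
  · intro h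
    refine le_antisymm ?_ (rk_mono hfin (subset_insert e X))
    have hsub : insert e X ⊆ M.closure X := insert_subset h (M.subset_closure X hX)
    calc rk M (insert e X) ≤ rk M (M.closure X) := rk_mono hfin hsub
    _ = rk M X := rk_closure_eq hfin X
  · intro h
    by_contra hcl
    rw [← hI.closure_eq_closure, hI.indep.mem_closure_iff'] at hcl
    push_neg at hcl
    obtain ⟨hind, heI⟩ := hcl he
    have hle : (insert e I).ncard ≤ rk M (insert e X) :=
      ncard_le_rk hfin hind (insert_subset_insert hI.subset)
    rw [Set.ncard_insert_of_notMem heI (hfin.subset hI.indep.subset_ground)] at hle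
    rw [rk_eq_of_basis' hfin hI.isBasis'] at h
    omega

lemma flat_of_closure_subset (hG : G ⊆ M.E) (h : M.closure G ⊆ G) : M.IsFlat G := by
  refine ⟨fun I X hIG hIX => ?_, hG⟩
  have hXG : M.closure X = M.closure G := by
    rw [← hIX.closure_eq_closure, hIG.closure_eq_closure]
  exact (M.subset_closure X hIX.subset_ground).trans (by rw [hXG]; exact h)

lemma rk_dual_add (hfin : M.E.Finite) (hX : X ⊆ M.E) :
    rk M✶ X + rkM M = X.ncard + rk M (M.E \ X) := by
  have hfin' : M✶.E.Finite := by rwa [dual_ground]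
  obtain ⟨I, hI⟩ := M.exists_isBasis (M.E \ X) diff_subset
  obtain ⟨B, hB, hIB⟩ := hI.indep.exists_isBase_superset
  have hBE : B ⊆ M.E := hB.subset_ground
  have hBdX : B \ X = I := by
    refine (hI.eq_of_subset_indep (hB.indep.subset diff_subset)
      (subset_diff.mpr ⟨hIB, (subset_diff.mp hI.subset).2⟩)
      (diff_subset_diff_left hBE)).symm
  have hrkE : rkM M = B.ncard := rk_eq_of_basis' hfin hB.isBasis_ground.isBasis'
  have hrkdiff : rk M (M.E \ X) = I.ncard := rk_eq_of_basis' hfin hI.isBasis'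
  have c2 : (X ∩ B).ncard + (X \ B).ncard = X.ncard :=
    Set.ncard_inter_add_ncard_diff_eq_ncard X B (hfin.subset hX)
  have c4 : (B ∩ X).ncard + (B \ X).ncard = B.ncard :=
    Set.ncard_inter_add_ncard_diff_eq_ncard B X (hfin.subset hBE)
  have c7 : (B \ X).ncard = I.ncard := by rw [hBdX]
  have c10 : (X ∩ B).ncard = (B ∩ X).ncard := by rw [inter_comm]
  have hrkdual : rk M✶ X = (X \ B).ncard := by
    refine le_antisymm (rk_le hfin' fun J hJ hJX => ?_)
      (ncard_le_rk hfin' (dual_indep_iff_exists'.mpr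
        ⟨diff_subset.trans hX, B, hB, disjoint_sdiff_left⟩) diff_subset)
    obtain ⟨hJE, B', hB', hdis⟩ := dual_indep_iff_exists'.mp hJ
    have hJXB' : J ⊆ X \ B' := subset_diff.mpr ⟨hJX, hdis⟩
    have c1 : (X ∩ B').ncard + (X \ B').ncard = X.ncard :=
      Set.ncard_inter_add_ncard_diff_eq_ncard X B' (hfin.subset hX)
    have c3 : (B' ∩ X).ncard + (B' \ X).ncard = B'.ncard :=
      Set.ncard_inter_add_ncard_diff_eq_ncard B' X (hfin.subset hB'.subset_ground)
    have c5 : B'.ncard = B.ncard := hB'.ncard_eq_ncard_of_isBase hB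
    have c6 : (B' \ X).ncard ≤ I.ncard := by
      have : (B' \ X).ncard ≤ rk M (M.E \ X) :=
        ncard_le_rk hfin (hB'.indep.subset diff_subset)
          (diff_subset_diff_left hB'.subset_ground)
      omega
    have c8 : J.ncard ≤ (X \ B').ncard :=
      Set.ncard_le_ncard hJXB' (hfin.subset (diff_subset.trans hX))
    have c9 : (X ∩ B').ncard = (B' ∩ X).ncard := by rw [inter_comm]
    omega
  rw [hrkdual, hrkdiff, hrkE]
  omega

lemma rk_restrict (M : Matroid α) (R X : Set α) : rk (M ↾ R) X = rk M (X ∩ R) := by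
  unfold rk
  congr 1
  ext n
  constructor
  · rintro ⟨I, hI, hIX, rfl⟩
    exact ⟨I, (restrict_indep_iff.mp hI).1,
      subset_inter hIX (restrict_indep_iff.mp hI).2, rfl⟩
  · rintro ⟨I, hI, hIX, rfl⟩
    exact ⟨I, restrict_indep_iff.mpr ⟨hI, (subset_inter_iff.mp hIX).2⟩,
      (subset_inter_iff.mp hIX).1, rfl⟩

lemma rk_contract_add (hfin : M.E.Finite) (hFE : F ⊆ M.E) (hX : X ⊆ M.E \ F) :
    rk (contractBy M F) X + rk M F = rk M (X ∪ F) := by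
  have hfin1 : (M✶ ↾ (M.E \ F)).E.Finite := hfin.subset diff_subset
  have heq : contractBy M F = (M✶ ↾ (M.E \ F))✶ := rfl
  have E1 := rk_dual_add (M := M✶ ↾ (M.E \ F)) hfin1
    (show X ⊆ (M✶ ↾ (M.E \ F)).E from hX)
  have hE : (M✶ ↾ (M.E \ F)).E = M.E \ F := rfl
  rw [hE] at E1
  have hr1 : rk (M✶ ↾ (M.E \ F)) ((M.E \ F) \ X) = rk M✶ ((M.E \ F) \ X) := by
    rw [rk_restrict, inter_eq_self_of_subset_left diff_subset]
  have hr2 : rkM (M✶ ↾ (M.E \ F)) = rk M✶ (M.E \ F) := by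
    show rk (M✶ ↾ (M.E \ F)) (M.E \ F) = _
    rw [rk_restrict, inter_self]
  rw [hr1, hr2] at E1
  have E2 := rk_dual_add (M := M) hfin (diff_subset : M.E \ F ⊆ M.E)
  rw [diff_diff_cancel_left hFE] at E2
  have E3 := rk_dual_add (M := M) hfin
    (show (M.E \ F) \ X ⊆ M.E from diff_subset.trans diff_subset)
  have hset : M.E \ ((M.E \ F) \ X) = X ∪ F := by
    ext e
    simp only [mem_diff, mem_union]
    constructor
    · rintro ⟨heE, h⟩
      by_cases hF' : e ∈ F
      · exact Or.inr hF'
      · by_cases hX' : e ∈ X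
        · exact Or.inl hX'
        · exact absurd ⟨⟨heE, hF'⟩, hX'⟩ h
    · rintro (hX' | hF')
      · exact ⟨(hX hX').1, fun h => h.2 hX'⟩
      · exact ⟨hFE hF', fun h => h.1.2 hF'⟩
  rw [hset] at E3
  have hcard : ((M.E \ F) \ X).ncard + X.ncard = (M.E \ F).ncard :=
    Set.ncard_diff_add_ncard_of_subset hX (hfin.subset diff_subset)
  rw [heq]
  omega

lemma flat_contractBy (hfin : M.E.Finite) (hF : M.IsFlat F)
    (hA' : (contractBy M F).IsFlat A') : M.IsFlat (A' ∪ F) := by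
  have hNE : (contractBy M F).E = M.E \ F := rfl
  have hNfin : (contractBy M F).E.Finite := hfin.subset diff_subset
  have hA'E : A' ⊆ M.E \ F := hA'.subset_ground
  have hGE : A' ∪ F ⊆ M.E := union_subset (hA'E.trans diff_subset) hF.subset_ground
  refine flat_of_closure_subset hGE fun e he => ?_
  by_contra heG
  have heE : e ∈ M.E := M.closure_subset_ground _ he
  have heA' : e ∉ A' := fun h => heG (Or.inl h)
  have heF : e ∉ F := fun h => heG (Or.inr h)
  have h1 : rk M (insert e (A' ∪ F)) = rk M (A' ∪ F) :=
    (mem_closure_iff_rk hfin hGE heE).mp he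
  have e1 := rk_contract_add hfin hF.subset_ground hA'E
  have e2 := rk_contract_add hfin hF.subset_ground
    (show insert e A' ⊆ M.E \ F from insert_subset ⟨heE, heF⟩ hA'E)
  rw [insert_union] at e2
  have h2 : rk (contractBy M F) (insert e A') = rk (contractBy M F) A' := by omega
  have h3 : e ∈ (contractBy M F).closure A' :=
    (mem_closure_iff_rk hNfin (show A' ⊆ (contractBy M F).E from hA'E)
      (show e ∈ (contractBy M F).E from ⟨heE, heF⟩)).mpr h2
  rw [hA'.closure] at h3
  exact heA' h3

end Helpers

/-- Let M be a finite hypermodular matroid of rank ≥ 3 and F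
a flat of corank ≥ 3. Then the contraction M/F is a hypermodular matroid. -/
theorem statement_13 {α : Type*} (M : Matroid α) (hfin : M.E.Finite)
    (hrk : 3 ≤ rkM M) (hhm : Hypermodular M)
    (F : Set α) (hF : M.IsFlat F) (hcorank : rk M F + 3 ≤ rkM M) :
    3 ≤ rkM (contractBy M F) ∧ Hypermodular (contractBy M F) := by
  have hFE : F ⊆ M.E := hF.subset_ground
  have h0 : rk (contractBy M F) (M.E \ F) + rk M F = rk M (M.E \ F ∪ F) :=
    rk_contract_add hfin hFE Subset.rfl
  rw [diff_union_of_subset hFE] at h0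
  have hrkN : rkM (contractBy M F) + rk M F = rkM M := h0
  refine ⟨by omega, fun A' B' hA' hB' ha hb => ?_⟩
  have hA'E : A' ⊆ M.E \ F := hA'.subset_ground
  have hB'E : B' ⊆ M.E \ F := hB'.subset_ground
  have eA := rk_contract_add hfin hFE hA'E
  have eB := rk_contract_add hfin hFE hB'E
  have eU := rk_contract_add hfin hFE (union_subset hA'E hB'E)
  have eI := rk_contract_add hfin hFE ((inter_subset_left (t := B')).trans hA'E)
  have hU : A' ∪ B' ∪ F = (A' ∪ F) ∪ (B' ∪ F) := by
    ext e; simp only [mem_union]; tauto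
  have hI2 : A' ∩ B' ∪ F = (A' ∪ F) ∩ (B' ∪ F) := by
    ext e; simp only [mem_union, mem_inter_iff]; tauto
  rw [hU] at eU
  rw [hI2] at eI
  have hcA : rk M (A' ∪ F) + 1 = rkM M := by omega
  have hcB : rk M (B' ∪ F) + 1 = rkM M := by omega
  have hmp := hhm (A' ∪ F) (B' ∪ F) (flat_contractBy hfin hF hA')
    (flat_contractBy hfin hF hB') hcA hcB
  simp only [ModularPair, pairDefect] at hmp ⊢
  omega

end SMC
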